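/- Fix k > 0 with k ≠ 1 and C > 0. Define on the set I_C = {s > 0 : 2Cs^{k+1}/(s²+1) > 1} the functions t(s) = √(2Cs^{k+1}/(s²+1) − 1) and g(s) = ((k−1)s² − (k+1))/(4ks) · √(2Cs^{k+1}/(s²+1)). Then the pair (t(s), g(s)) satisfies (1 + t²) + ((t + 1/t)·(dg/dt) + g)² = k²·((t + 1/t)·(dg/dt) − g)² wherever t(s) ≠ 0 and ds/dt exists, where dg/dt = g'(s)/t'(s). -/

import Mathlib

open Real

theorem parametric_solution_satisfies_CRPC_ODE (k C : ℝ) (hk : 0 < k) (hk1 : k ≠ 1)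
    (hC : 0 < C)
    (h t g : ℝ → ℝ)
    (hh : h = fun s => 2 * C * s ^ (k + 1) / (s ^ 2 + 1))
    (ht : t = fun s => Real.sqrt (h s - 1))
    (hg : g = fun s => ((k - 1) * s ^ 2 - (k + 1)) / (4 * k * s) * Real.sqrt (h s)) :
    ∀ s : ℝ, 0 < s → 1 < h s → t s ≠ 0 → deriv t s ≠ 0 →
      (1 + (t s) ^ 2) + ((t s + 1 / t s) * (deriv g s / deriv t s) + g s) ^ 2
        = k ^ 2 * ((t s + 1 / t s) * (deriv g s / deriv t s) - g s) ^ 2 := by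
  intro s hs hH hts hdts
  have hs0 : s ≠ 0 := hs.ne'
  have hden : (s : ℝ) ^ 2 + 1 ≠ 0 := by positivity
  have hP : (0 : ℝ) < s ^ k := Real.rpow_pos_of_pos hs k
  have hrpow : s ^ (k + 1) = s ^ k * s := by
    rw [Real.rpow_add hs, Real.rpow_one]
  have hHpos : 0 < h s := lt_trans one_pos hH
  have hH1 : h s - 1 ≠ 0 := by linarith
  set x := Real.sqrt (h s) with hxdef
  set y := Real.sqrt (h s - 1) with hydef
  have hx2 : x ^ 2 = h s := Real.sq_sqrt hHpos.le
  have hy2 : y ^ 2 = x ^ 2 - 1 := by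
    rw [hx2, hydef, Real.sq_sqrt (by linarith)]
  have hxpos : 0 < x := Real.sqrt_pos.2 hHpos
  have hypos : 0 < y := Real.sqrt_pos.2 (by linarith)
  -- derivative of h
  have hnum : HasDerivAt (fun u : ℝ => 2 * C * u ^ (k + 1)) (2 * C * ((k + 1) * s ^ k)) s := by
    have h1 := (Real.hasDerivAt_rpow_const (p := k + 1) (Or.inl hs0)).const_mul (2 * C)
    have e : k + 1 - 1 = k := by ring
    rw [e] at h1
    exact h1
  have hd : HasDerivAt (fun u : ℝ => u ^ 2 + 1) (2 * s) s := by
    simpa using (hasDerivAt_pow 2 s).add_const 1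
  have hH' : HasDerivAt h (2 * C * s ^ k * ((k - 1) * s ^ 2 + (k + 1)) / (s ^ 2 + 1) ^ 2) s := by
    rw [hh]
    convert hnum.div hd hden using 1
    · rfl
    · rfl
    · rfl
    rw [hrpow]; ring
  -- rewrite h' in terms of x
  have hDh : 2 * C * s ^ k * ((k - 1) * s ^ 2 + (k + 1)) / (s ^ 2 + 1) ^ 2
      = x ^ 2 * ((k - 1) * s ^ 2 + (k + 1)) / (s * (s ^ 2 + 1)) := by
    rw [hx2, hh]
    simp only
    rw [hrpow]
    field_simp
  rw [hDh] at hH'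
  -- derivative of t
  have ht' : HasDerivAt t (x ^ 2 * ((k - 1) * s ^ 2 + (k + 1)) / (s * (s ^ 2 + 1)) / (2 * y)) s := by
    rw [ht]
    exact (hH'.sub_const 1).sqrt hH1
  -- derivative of the rational factor q
  have hq : HasDerivAt (fun u : ℝ => ((k - 1) * u ^ 2 - (k + 1)) / (4 * k * u))
      (((k - 1) * (2 * s) * (4 * k * s) - ((k - 1) * s ^ 2 - (k + 1)) * (4 * k)) / (4 * k * s) ^ 2)
      s := by
    have h1 : HasDerivAt (fun u : ℝ => (k - 1) * u ^ 2 - (k + 1)) ((k - 1) * (2 * s)) s := by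
      have := ((hasDerivAt_pow 2 s).const_mul (k - 1)).sub_const (k + 1)
      simpa using this
    have h2 : HasDerivAt (fun u : ℝ => 4 * k * u) (4 * k) s := by
      simpa using (hasDerivAt_id s).const_mul (4 * k)
    exact h1.div h2 (by positivity)
  -- derivative of g
  have hg' : HasDerivAt g
      (((k - 1) * (2 * s) * (4 * k * s) - ((k - 1) * s ^ 2 - (k + 1)) * (4 * k)) / (4 * k * s) ^ 2 * x
        + ((k - 1) * s ^ 2 - (k + 1)) / (4 * k * s)
          * (x ^ 2 * ((k - 1) * s ^ 2 + (k + 1)) / (s * (s ^ 2 + 1)) / (2 * x))) s := by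
    rw [hg]
    exact hq.mul (hH'.sqrt hHpos.ne')
  have hdt : deriv t s = x ^ 2 * ((k - 1) * s ^ 2 + (k + 1)) / (s * (s ^ 2 + 1)) / (2 * y) :=
    ht'.deriv
  have hdg : deriv g s
      = ((k - 1) * (2 * s) * (4 * k * s) - ((k - 1) * s ^ 2 - (k + 1)) * (4 * k)) / (4 * k * s) ^ 2 * x
        + ((k - 1) * s ^ 2 - (k + 1)) / (4 * k * s)
          * (x ^ 2 * ((k - 1) * s ^ 2 + (k + 1)) / (s * (s ^ 2 + 1)) / (2 * x)) := hg'.deriv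
  -- D ≠ 0 from deriv t s ≠ 0
  have hD : (k - 1) * s ^ 2 + (k + 1) ≠ 0 := by
    intro h0
    apply hdts
    rw [hdt, h0]
    simp
  have hts' : t s = y := by rw [ht]
  have hgs : g s = ((k - 1) * s ^ 2 - (k + 1)) / (4 * k * s) * x := by rw [hg]
  have hty : t s + 1 / t s = x ^ 2 / y := by
    rw [hts']
    field_simp
    linarith [hy2]
  rw [hty, hdt, hdg, hgs, hts']
  have key1 : x ^ 2 / y *
      ((((k - 1) * (2 * s) * (4 * k * s) - ((k - 1) * s ^ 2 - (k + 1)) * (4 * k)) / (4 * k * s) ^ 2 * x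
        + ((k - 1) * s ^ 2 - (k + 1)) / (4 * k * s)
          * (x ^ 2 * ((k - 1) * s ^ 2 + (k + 1)) / (s * (s ^ 2 + 1)) / (2 * x)))
        / (x ^ 2 * ((k - 1) * s ^ 2 + (k + 1)) / (s * (s ^ 2 + 1)) / (2 * y)))
      + ((k - 1) * s ^ 2 - (k + 1)) / (4 * k * s) * x
      = x * (s ^ 2 - 1) / (2 * s) := by
    field_simp
    ring
  have key2 : x ^ 2 / y *
      ((((k - 1) * (2 * s) * (4 * k * s) - ((k - 1) * s ^ 2 - (k + 1)) * (4 * k)) / (4 * k * s) ^ 2 * x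
        + ((k - 1) * s ^ 2 - (k + 1)) / (4 * k * s)
          * (x ^ 2 * ((k - 1) * s ^ 2 + (k + 1)) / (s * (s ^ 2 + 1)) / (2 * x)))
        / (x ^ 2 * ((k - 1) * s ^ 2 + (k + 1)) / (s * (s ^ 2 + 1)) / (2 * y)))
      - ((k - 1) * s ^ 2 - (k + 1)) / (4 * k * s) * x
      = x * (s ^ 2 + 1) / (2 * (k * s)) := by
    field_simp
    ring
  rw [key1, key2, hy2]
  field_simp
  ring
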